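/- Let T be a p-string of length n ≥ 1 ending with a sentinel symbol $ ∈ Σ that occurs nowhere else in T. Then the number of branching elements of PrevSub(T) is less than n, where u ∈ PrevSub(T) is branching if there exist two distinct symbols a ≠ b over Σ ∪ ℕ with both ua ∈ PrevSub(T) and ub ∈ PrevSub(T). -/

import Mathlib

open List

variable {σ π : Type*}

/-- The prev-encoding symbol of `w` at (0-indexed) position `i`:
constants are kept; a parameter is encoded by the distance to its
previous occurrence, or `0` if it has no previous occurrence. -/
def prevAt [DecidableEq σ] [DecidableEq π] (w : List (σ ⊕ π)) (i : ℕ) : σ ⊕ ℕ :=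
  match w[i]? with
  | some (Sum.inl a) => Sum.inl a
  | some (Sum.inr x) =>
      let s := (Finset.range i).filter (fun j => w[j]? = some (Sum.inr x))
      if h : s.Nonempty then Sum.inr (i - s.max' h) else Sum.inr 0
  | none => Sum.inr 0

/-- The prev-encoding `⟨w⟩` of a p-string `w`. -/
def prevEncode [DecidableEq σ] [DecidableEq π] (w : List (σ ⊕ π)) : List (σ ⊕ ℕ) :=
  (List.range w.length).map (prevAt w)

/-- The `k`-re-encoding `⟨u⟩ₖ` of a pv-string `u`: a numeric symbol `u[i]`
(1-indexed) is replaced by `0` whenever `u[i] ≥ i - k + 1`. -/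
def reEncode (k : ℕ) (u : List (σ ⊕ ℕ)) : List (σ ⊕ ℕ) :=
  (List.range u.length).map (fun i =>
    match u[i]? with
    | some (Sum.inl a) => Sum.inl a
    | some (Sum.inr m) => if i + 2 ≤ m + k then Sum.inr (0 : ℕ) else Sum.inr m
    | none => Sum.inr 0)

/-- The implicit suffix link `sl(u) = ⟨u[2:]⟩₁`. -/
def sl (u : List (σ ⊕ ℕ)) : List (σ ⊕ ℕ) := reEncode 1 u.tail

/-- The set of prev-encoded substrings of `T`. -/
def PrevSub [DecidableEq σ] [DecidableEq π] (T : List (σ ⊕ π)) : Set (List (σ ⊕ ℕ)) :=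
  { u | ∃ w, w <:+: T ∧ u = prevEncode w }

/-- `u` is a leaf of `PrevSub T`: it belongs to `PrevSub T` and is not a
proper prefix of any element of `PrevSub T`. -/
def IsLeaf [DecidableEq σ] [DecidableEq π] (T : List (σ ⊕ π)) (u : List (σ ⊕ ℕ)) : Prop :=
  u ∈ PrevSub T ∧ ∀ v ∈ PrevSub T, u <+: v → u = v

/-- `u` is a branching element of `PrevSub T`: two distinct one-symbol
extensions of `u` belong to `PrevSub T`. -/
def Branching [DecidableEq σ] [DecidableEq π] (T : List (σ ⊕ π)) (u : List (σ ⊕ ℕ)) : Prop :=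
  u ∈ PrevSub T ∧
    ∃ a b : σ ⊕ ℕ, a ≠ b ∧ u ++ [a] ∈ PrevSub T ∧ u ++ [b] ∈ PrevSub T

private lemma lexAppend {α : Type*} [LinearOrder α] {a b : α} (h : a < b) (p s t : List α) :
    p ++ a :: s < p ++ b :: t := by
  show List.Lex (· < ·) _ _
  exact List.Lex.append_left _ (List.Lex.rel h) p

private lemma existsLeaf {α : Type*} (S : Set (List α)) (hS : S.Finite) {x : List α}
    (hx : x ∈ S) :
    ∃ l, (l ∈ S ∧ ∀ v ∈ S, l <+: v → l = v) ∧ x <+: l := by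
  obtain ⟨l, hl, hmax⟩ := Set.exists_max_image {v | v ∈ S ∧ x <+: v} List.length
    (hS.subset fun v hv => hv.1) ⟨x, hx, List.prefix_refl x⟩
  exact ⟨l, ⟨hl.1, fun v hv hlv =>
    hlv.eq_of_length (le_antisymm hlv.length_le (hmax v ⟨hv, hl.2.trans hlv⟩))⟩, hl.2⟩

/-- Core abstract counting lemma: in a finite nonempty set of strings, the number
of branching elements is strictly less than the number of leaves. -/
private lemma coreCount {α : Type*} [LinearOrder α] (S : Set (List α)) (hS : S.Finite)
    {z : List α} (hz : z ∈ S) :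
    {u | u ∈ S ∧ ∃ a b : α, a ≠ b ∧ u ++ [a] ∈ S ∧ u ++ [b] ∈ S}.ncard + 1
      ≤ {l | l ∈ S ∧ ∀ v ∈ S, l <+: v → l = v}.ncard := by
  classical
  set L := {l | l ∈ S ∧ ∀ v ∈ S, l <+: v → l = v} with hLdef
  set Br := {u | u ∈ S ∧ ∃ a b : α, a ≠ b ∧ u ++ [a] ∈ S ∧ u ++ [b] ∈ S} with hBrdef
  have hLfin : L.Finite := hS.subset fun l hl => hl.1
  have hleaf : ∀ x ∈ S, ∃ l ∈ L, x <+: l := by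
    intro x hx
    obtain ⟨l, hl, hpre⟩ := existsLeaf S hS hx
    exact ⟨l, hl, hpre⟩
  have hLne : L.Nonempty := by
    obtain ⟨l, hl, -⟩ := hleaf z hz
    exact ⟨l, hl⟩
  obtain ⟨l₀, hl₀, hmin₀⟩ := Set.exists_min_image L id hLfin hLne
  have claim1 : ∀ u ∈ Br, ∃ l, l ∈ L ∧ ∃ a b : α, a < b ∧ u ++ [a] ∈ S ∧
      (u ++ [b]) <+: l ∧ ∀ l' ∈ L, (u ++ [b]) <+: l' → l ≤ l' := by
    rintro u ⟨huS, a, b, hab, ha, hb⟩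
    obtain ⟨a, b, h, ha, hb⟩ : ∃ a b : α, a < b ∧ u ++ [a] ∈ S ∧ u ++ [b] ∈ S := by
      rcases hab.lt_or_gt with h | h
      exacts [⟨a, b, h, ha, hb⟩, ⟨b, a, h, hb, ha⟩]
    have hne : {l | l ∈ L ∧ (u ++ [b]) <+: l}.Nonempty := by
      obtain ⟨l, hl, hpre⟩ := hleaf _ hb
      exact ⟨l, hl, hpre⟩
    obtain ⟨l, ⟨hlL, hlpre⟩, hlmin⟩ := Set.exists_min_image _ id
      (hLfin.subset fun l hl => hl.1) hne
    exact ⟨l, hlL, a, b, h, ha, hlpre, fun l' hl' hp => hlmin l' ⟨hl', hp⟩⟩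
  set g : List α → List α := fun u => if h : u ∈ Br then (claim1 u h).choose else []
    with hgdef
  have hP : ∀ u (h : u ∈ Br), g u ∈ L ∧ ∃ a b : α, a < b ∧ u ++ [a] ∈ S ∧
      (u ++ [b]) <+: g u ∧ ∀ l' ∈ L, (u ++ [b]) <+: l' → g u ≤ l' := by
    intro u h
    have : g u = (claim1 u h).choose := dif_pos h
    rw [this]
    exact (claim1 u h).choose_spec
  have hupre : ∀ u ∈ Br, u <+: g u := by
    intro u hu
    obtain ⟨-, a, b, -, -, hpre, -⟩ := hP u hu
    exact (u.prefix_append [b]).trans hpre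
  have hne₀ : ∀ u ∈ Br, g u ≠ l₀ := by
    intro u hu heq
    obtain ⟨-, a, b, hab, haS, hpre, -⟩ := hP u hu
    obtain ⟨l'', hl''L, hl''pre⟩ := hleaf _ haS
    obtain ⟨s, hs⟩ := hl''pre
    obtain ⟨t, ht⟩ := hpre
    rw [List.append_assoc] at hs ht
    have hlt : l'' < g u := by
      rw [← hs, ← ht]
      exact lexAppend hab u s t
    have := hmin₀ l'' hl''L
    rw [← heq] at this
    exact absurd (lt_of_lt_of_le hlt this) (lt_irrefl _)
  have claim2 : ∀ u ∈ Br, ∀ v ∈ Br, u <+: v → u ≠ v → g u = g v → False := by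
    intro u hu v hv huv hne heq
    obtain ⟨-, a, b, hab, haS, hpre, hmin⟩ := hP u hu
    obtain ⟨-, a', b', hab', haS', hpre', -⟩ := hP v hv
    have hulen : u.length < v.length := by
      rcases lt_or_eq_of_le huv.length_le with h | h
      · exact h
      · exact absurd (huv.eq_of_length h) hne
    have hvl : v <+: g u := heq ▸ (hupre v hv)
    have hubv : u ++ [b] <+: v := by
      rcases List.prefix_or_prefix_of_prefix hpre hvl with h | h
      · exact h
      · have hlen : v.length = u.length + 1 := le_antisymm
          (by simpa using h.length_le) (by omega)
        have : v = u ++ [b] := h.eq_of_length (by simp [hlen])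
        rw [this]
    obtain ⟨l'', hl''L, hl''pre⟩ := hleaf _ haS'
    have hle : g u ≤ l'' := hmin l'' hl''L
      (hubv.trans ((v.prefix_append [a']).trans hl''pre))
    obtain ⟨s, hs⟩ := hl''pre
    obtain ⟨t, ht⟩ := hpre'
    rw [List.append_assoc] at hs ht
    have hlt : l'' < g v := by
      rw [← hs, ← ht]
      exact lexAppend hab' v s t
    rw [← heq] at hlt
    exact absurd (lt_of_lt_of_le hlt hle) (lt_irrefl _)
  have hinj : Set.InjOn g Br := by
    intro u hu v hv heq
    by_contra hne
    rcases List.prefix_or_prefix_of_prefix (hupre u hu) (heq ▸ (hupre v hv)) with h | h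
    · exact claim2 u hu v hv h hne heq
    · exact claim2 v hv u hu h (Ne.symm hne) heq.symm
  have hmaps : ∀ u ∈ Br, g u ∈ L \ {l₀} := fun u hu => ⟨(hP u hu).1, hne₀ u hu⟩
  have h1 : Br.ncard ≤ (L \ {l₀}).ncard :=
    Set.ncard_le_ncard_of_injOn g hmaps hinj hLfin.diff
  have h2 : (L \ {l₀}).ncard = L.ncard - 1 := Set.ncard_diff_singleton_of_mem hl₀
  have h3 : 0 < L.ncard := (Set.ncard_pos hLfin).mpr hLne
  omega

private lemma prevAt_append [DecidableEq σ] [DecidableEq π] (w t : List (σ ⊕ π)) {i : ℕ}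
    (hi : i < w.length) : prevAt (w ++ t) i = prevAt w i := by
  have hg : ∀ j ≤ i, (w ++ t)[j]? = w[j]? := fun j hj =>
    List.getElem?_append_left (lt_of_le_of_lt hj hi)
  unfold prevAt
  rw [hg i le_rfl]
  rcases hwi : w[i]? with _ | (a | x)
  · rfl
  · rfl
  · have hfil : (Finset.range i).filter (fun j => (w ++ t)[j]? = some (Sum.inr x))
        = (Finset.range i).filter (fun j => w[j]? = some (Sum.inr x)) := by
      apply Finset.filter_congr
      intro j hj
      rw [hg j (le_of_lt (Finset.mem_range.mp hj))]
    simp only [hfil]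

private lemma prevEncode_prefix [DecidableEq σ] [DecidableEq π] (w t : List (σ ⊕ π)) :
    prevEncode w <+: prevEncode (w ++ t) := by
  have h : prevEncode w = (prevEncode (w ++ t)).take w.length := by
    unfold prevEncode
    rw [← List.map_take, List.take_range, List.length_append,
      min_eq_left (Nat.le_add_right _ _)]
    apply List.map_congr_left
    intro i hi
    exact (prevAt_append w t (List.mem_range.mp hi)).symm
  rw [h]
  exact List.take_prefix _ _

/-- For a text of length `n ≥ 1` ending with a sentinel occurring nowhere else,
the number of branching elements of `PrevSub T` is less than `n`. -/
theorem card_branching_lt [DecidableEq σ] [DecidableEq π]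
    (T' : List (σ ⊕ π)) (d : σ) (T : List (σ ⊕ π))
    (hT : T = T' ++ [Sum.inl d]) (hd : Sum.inl d ∉ T') :
    {u : List (σ ⊕ ℕ) | Branching T u}.Finite ∧
      {u : List (σ ⊕ ℕ) | Branching T u}.ncard < T.length := by
  letI : LinearOrder (σ ⊕ ℕ) := IsWellOrder.linearOrder WellOrderingRel
  have hS : (PrevSub T).Finite := by
    have hsub : PrevSub T ⊆ ↑((T.sublists.map prevEncode).toFinset) := by
      rintro u ⟨w, hw, rfl⟩
      simp only [Finset.coe_sort_coe, List.coe_toFinset, Set.mem_setOf_eq, List.mem_map]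
      exact ⟨w, List.mem_sublists.mpr hw.sublist, rfl⟩
    exact Set.Finite.subset (Finset.finite_toSet _) hsub
  have hz : prevEncode T ∈ PrevSub T := ⟨T, List.infix_refl T, rfl⟩
  have hBreq : {u : List (σ ⊕ ℕ) | Branching T u}
      = {u | u ∈ PrevSub T ∧ ∃ a b : σ ⊕ ℕ, a ≠ b ∧ u ++ [a] ∈ PrevSub T ∧
          u ++ [b] ∈ PrevSub T} := rfl
  refine ⟨hS.subset fun u hu => hu.1, ?_⟩
  have hcore := coreCount (PrevSub T) hS hz
  -- leaves inject into the nonempty suffixes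
  have hLsub : {l | l ∈ PrevSub T ∧ ∀ v ∈ PrevSub T, l <+: v → l = v}
      ⊆ (fun k => prevEncode (T.drop k)) '' (Set.Iio T.length) := by
    rintro l ⟨⟨w, hw, rfl⟩, hlf⟩
    obtain ⟨s, t, hst⟩ := hw
    have hdrop : T.drop s.length = w ++ t := by
      rw [← hst, List.append_assoc, List.drop_left]
    have hmem : prevEncode (T.drop s.length) ∈ PrevSub T :=
      ⟨T.drop s.length, (List.drop_suffix _ _).isInfix, rfl⟩
    have hpre : prevEncode w <+: prevEncode (T.drop s.length) := by
      rw [hdrop]; exact prevEncode_prefix w t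
    have heq : prevEncode w = prevEncode (T.drop s.length) := hlf _ hmem hpre
    have hk : s.length < T.length := by
      by_contra hok
      push_neg at hok
      have hnil : T.drop s.length = [] := List.drop_eq_nil_of_le hok
      rw [hnil] at heq
      have hw0 : prevEncode w = [] := by
        have hlen := congrArg List.length heq
        simp only [prevEncode, List.length_map, List.length_range, List.length_nil] at hlen
        simp [prevEncode, hlen]
      have hTpe : prevEncode T ∈ PrevSub T := ⟨T, List.infix_refl T, rfl⟩
      have hwT := hlf _ hTpe (by rw [hw0]; exact List.nil_prefix)
      have hlen := congrArg List.length hwT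
      rw [hw0] at hlen
      simp only [List.length_nil, prevEncode, List.length_map, List.length_range] at hlen
      rw [hT] at hlen
      simp at hlen
    exact ⟨s.length, hk, heq.symm⟩
  have hLcard : {l | l ∈ PrevSub T ∧ ∀ v ∈ PrevSub T, l <+: v → l = v}.ncard
      ≤ T.length := by
    have h1 := Set.ncard_le_ncard hLsub ((Set.finite_Iio _).image _)
    have h2 := Set.ncard_image_le (f := fun k => prevEncode (T.drop k))
      (Set.finite_Iio T.length)
    have h3 : (Set.Iio T.length).ncard = T.length := by
      rw [← Finset.coe_Iio, Set.ncard_coe_finset, Nat.card_Iio]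
    omega
  rw [hBreq]
  omega
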